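/- arXiv:1403.7129 — 4 statements merged into one kernel-verified Lean document; each statement's English description precedes it below -/
import Mathlib

section
/- Let n ≥ 3 and let p ≤ 0 and q ∈ ℝ satisfy p + q > 2/n. Define φ(s) = (s+1)^{-p} and ψ(s) = s(s+1)^{q-1} for s ≥ 0, and G(s) = ∫_{1}^{s} ∫_{1}^{σ} φ(τ)/ψ(τ) dτ dσ for s > 0. Then there exist a > 0 and α > 2/n such that G(s) ≤ a·s^{2-α} for all s ≥ 1. -/
open MeasureTheory intervalIntegral Set

theorem stmt0 (n : ℕ) (hn : 3 ≤ n) (p q : ℝ) (hp : p ≤ 0)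
    (hpq : 2 / (n : ℝ) < p + q)
    (φ ψ G : ℝ → ℝ)
    (hφ : ∀ s, φ s = (s + 1) ^ (-p))
    (hψ : ∀ s, ψ s = s * (s + 1) ^ (q - 1))
    (hG : ∀ s, G s = ∫ σ in (1:ℝ)..s, ∫ τ in (1:ℝ)..σ, φ τ / ψ τ) :
    ∃ a > (0:ℝ), ∃ α > 2 / (n : ℝ), ∀ s ≥ (1:ℝ), G s ≤ a * s ^ (2 - α) := by
  have hn3 : (3:ℝ) ≤ (n:ℝ) := by exact_mod_cast hn
  have hnpos : (0:ℝ) < n := by linarith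
  have h2n : 2 / (n:ℝ) ≤ 2/3 := by
    apply div_le_div_of_nonneg_left (by norm_num) (by norm_num) hn3
  set β : ℝ := min (p + q) 1 with hβ
  have hβgt : 2 / (n:ℝ) < β := lt_min hpq (by linarith)
  set α : ℝ := (2 / (n:ℝ) + β) / 2 with hα
  have hαgt : 2 / (n:ℝ) < α := by simp [hα]; linarith
  have hαlt1 : α < 1 := by
    have : β ≤ 1 := min_le_right _ _
    simp only [hα]; linarith
  have hαpos : 0 < α := lt_trans (by positivity) hαgt
  have hαpq : α < p + q := by
    have : β ≤ p + q := min_le_left _ _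
    simp only [hα]; linarith
  set C : ℝ := max 1 ((2:ℝ) ^ (1 - p - q)) with hC
  have hCpos : 0 < C := lt_of_lt_of_le one_pos (le_max_left _ _)
  -- pointwise bound
  have hpt : ∀ τ : ℝ, 1 ≤ τ → φ τ / ψ τ ≤ C * τ ^ (-α) := by
    intro τ hτ
    have hτ0 : (0:ℝ) < τ := by linarith
    have hτ1 : (0:ℝ) < τ + 1 := by linarith
    rw [hφ, hψ]
    have hrw : (τ + 1) ^ (-p) / (τ * (τ + 1) ^ (q - 1))
        = (τ + 1) ^ (1 - p - q) / τ := by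
      rw [div_eq_div_iff (by positivity) hτ0.ne', mul_comm τ, ← mul_assoc,
        ← Real.rpow_add hτ1, show 1 - p - q + (q - 1) = -p by ring]
    rw [hrw]
    have hbound : (τ + 1) ^ (1 - p - q) ≤ C * τ ^ (1 - p - q) := by
      rcases le_or_gt 0 (1 - p - q) with hm | hm
      · calc (τ + 1) ^ (1 - p - q) ≤ (2 * τ) ^ (1 - p - q) := by
              apply Real.rpow_le_rpow (by linarith) (by linarith) hm
          _ = (2:ℝ) ^ (1 - p - q) * τ ^ (1 - p - q) :=
              Real.mul_rpow (by norm_num) hτ0.le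
          _ ≤ C * τ ^ (1 - p - q) := by
              apply mul_le_mul_of_nonneg_right (le_max_right _ _)
              positivity
      · calc (τ + 1) ^ (1 - p - q) ≤ τ ^ (1 - p - q) :=
              Real.rpow_le_rpow_of_nonpos hτ0 (by linarith) hm.le
          _ ≤ C * τ ^ (1 - p - q) := by
              nlinarith [Real.rpow_pos_of_pos hτ0 (1 - p - q),
                le_max_left 1 ((2:ℝ) ^ (1 - p - q))]
    calc (τ + 1) ^ (1 - p - q) / τ ≤ C * τ ^ (1 - p - q) / τ := by gcongr
      _ = C * τ ^ (-p - q) := by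
          rw [mul_div_assoc, ← Real.rpow_sub_one hτ0.ne']
          ring_nf
      _ ≤ C * τ ^ (-α) := by
          apply mul_le_mul_of_nonneg_left _ hCpos.le
          apply Real.rpow_le_rpow_of_exponent_le hτ
          linarith
  -- continuity of f
  have hfc : ∀ b : ℝ, 1 ≤ b → ContinuousOn (fun τ => φ τ / ψ τ) (uIcc 1 b) := by
    intro b hb
    rw [uIcc_of_le hb]
    have h1 : ∀ τ ∈ Icc (1:ℝ) b, (0:ℝ) < τ := fun τ hτ => lt_of_lt_of_le one_pos hτ.1
    apply ContinuousOn.div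
    · intro τ hτ
      rw [show φ = fun s => (s+1) ^ (-p) from funext hφ]
      exact ((continuousOn_id.add continuousOn_const).rpow_const
        (fun x hx => Or.inl (by intro h; simp only [Pi.add_apply, id_eq] at h; linarith [h1 x hx]))) τ hτ
    · intro τ hτ
      rw [show ψ = fun s => s * (s+1) ^ (q-1) from funext hψ]
      exact (continuousOn_id.mul ((continuousOn_id.add continuousOn_const).rpow_const
        (fun x hx => Or.inl (by intro h; simp only [Pi.add_apply, id_eq] at h; linarith [h1 x hx])))) τ hτ
    · intro τ hτ
      rw [hψ]
      have := h1 τ hτ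
      positivity
  have hfint : ∀ b : ℝ, 1 ≤ b → IntervalIntegrable (fun τ => φ τ / ψ τ) volume 1 b :=
    fun b hb => (hfc b hb).intervalIntegrable
  have hpow : ∀ (r : ℝ) (b : ℝ), 1 ≤ b →
      ContinuousOn (fun τ : ℝ => τ ^ r) (uIcc 1 b) := by
    intro r b hb
    rw [uIcc_of_le hb]
    exact ContinuousOn.rpow_const continuousOn_id
      (fun x hx => Or.inl (by intro h; rw [show x = (0:ℝ) from h] at hx; linarith [hx.1]))
  -- inner integral bound
  have hinner : ∀ σ : ℝ, 1 ≤ σ →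
      (∫ τ in (1:ℝ)..σ, φ τ / ψ τ) ≤ (C / (1 - α)) * σ ^ (1 - α) := by
    intro σ hσ
    have hg : IntervalIntegrable (fun τ : ℝ => C * τ ^ (-α)) volume 1 σ :=
      (continuousOn_const.mul (hpow (-α) σ hσ)).intervalIntegrable
    have h1 : (∫ τ in (1:ℝ)..σ, φ τ / ψ τ) ≤ ∫ τ in (1:ℝ)..σ, C * τ ^ (-α) := by
      apply intervalIntegral.integral_mono_on hσ (hfint σ hσ) hg
      intro τ hτ; exact hpt τ hτ.1
    have h2 : (∫ τ in (1:ℝ)..σ, C * τ ^ (-α)) = C * ((σ ^ (1 - α) - 1) / (1 - α)) := by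
      rw [intervalIntegral.integral_const_mul, integral_rpow (by left; linarith),
        show -α + 1 = 1 - α by ring, Real.one_rpow]
    have h3 : C * ((σ ^ (1 - α) - 1) / (1 - α)) ≤ (C / (1 - α)) * σ ^ (1 - α) := by
      have hcst : (0:ℝ) ≤ C / (1 - α) := by
        apply div_nonneg hCpos.le; linarith
      calc C * ((σ ^ (1 - α) - 1) / (1 - α)) = C / (1 - α) * (σ ^ (1 - α) - 1) := by ring
        _ ≤ C / (1 - α) * σ ^ (1 - α) := by
            apply mul_le_mul_of_nonneg_left (by linarith) hcst
    linarith
  -- outer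
  have h1α : (0:ℝ) < 1 - α := by linarith
  have h2α : (0:ℝ) < 2 - α := by linarith
  refine ⟨C / (1 - α) / (2 - α), by positivity, α, hαgt, ?_⟩
  intro s hs
  rw [hG]
  have hIint : IntervalIntegrable (fun σ => ∫ τ in (1:ℝ)..σ, φ τ / ψ τ) volume 1 s :=
    (continuousOn_primitive_interval' (hfint s hs) left_mem_uIcc).intervalIntegrable
  have hg : IntervalIntegrable (fun σ : ℝ => (C / (1 - α)) * σ ^ (1 - α)) volume 1 s :=
    (continuousOn_const.mul (hpow (1 - α) s hs)).intervalIntegrable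
  have h1 : (∫ σ in (1:ℝ)..s, ∫ τ in (1:ℝ)..σ, φ τ / ψ τ)
      ≤ ∫ σ in (1:ℝ)..s, (C / (1 - α)) * σ ^ (1 - α) := by
    apply intervalIntegral.integral_mono_on hs hIint hg
    intro σ hσ; exact hinner σ hσ.1
  have h2 : (∫ σ in (1:ℝ)..s, (C / (1 - α)) * σ ^ (1 - α))
      = (C / (1 - α)) * ((s ^ (2 - α) - 1) / (2 - α)) := by
    rw [intervalIntegral.integral_const_mul, integral_rpow (by left; linarith),
      show (1 - α) + 1 = 2 - α by ring, Real.one_rpow]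
  have h3 : (C / (1 - α)) * ((s ^ (2 - α) - 1) / (2 - α))
      ≤ C / (1 - α) / (2 - α) * s ^ (2 - α) := by
    have hcst : (0:ℝ) ≤ C / (1 - α) / (2 - α) := by
      apply div_nonneg (div_nonneg hCpos.le (by linarith)); linarith
    calc (C / (1 - α)) * ((s ^ (2 - α) - 1) / (2 - α))
        = C / (1 - α) / (2 - α) * (s ^ (2 - α) - 1) := by ring
      _ ≤ C / (1 - α) / (2 - α) * s ^ (2 - α) := by
          apply mul_le_mul_of_nonneg_left (by linarith) hcst
  linarith
end

section
/- Let n ≥ 3, p ≤ 0, q ∈ ℝ with p + q > 2/n, and set φ(s) = (s+1)^{-p}, ψ(s) = s(s+1)^{q-1}, G(s) = ∫_{1}^{s} ∫_{1}^{σ} φ(τ)/ψ(τ) dτ dσ, H(s) = ∫_{0}^{s} σφ(σ)/ψ(σ) dσ. Then there exist γ ∈ (0, (n-2)/n) and b > 0 such that H(s) ≤ γ·G(s) + b(s+1) for all s > 0. -/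
open MeasureTheory intervalIntegral

theorem stmt1 (n : ℕ) (hn : 3 ≤ n) (p q : ℝ) (hp : p ≤ 0)
    (hpq : 2 / (n : ℝ) < p + q)
    (φ ψ G H : ℝ → ℝ)
    (hφ : ∀ s, φ s = (s + 1) ^ (-p))
    (hψ : ∀ s, ψ s = s * (s + 1) ^ (q - 1))
    (hG : ∀ s, G s = ∫ σ in (1:ℝ)..s, ∫ τ in (1:ℝ)..σ, φ τ / ψ τ)
    (hH : ∀ s, H s = ∫ σ in (0:ℝ)..s, σ * φ σ / ψ σ) :
    ∃ γ ∈ Set.Ioo (0:ℝ) (((n : ℝ) - 2) / n), ∃ b > (0:ℝ),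
      ∀ s > (0:ℝ), H s ≤ γ * G s + b * (s + 1) := by
  have hnR : (3:ℝ) ≤ (n:ℝ) := by exact_mod_cast hn
  set α : ℝ := p + q with hαdef
  have hα : 2 / (n:ℝ) < α := hpq
  have hα0 : 0 < α := lt_trans (by positivity) hα
  set M : ℝ := max 1 ((2:ℝ) ^ (1 - α)) with hMdef
  have hM1 : (1:ℝ) ≤ M := le_max_left _ _
  have hM2 : (2:ℝ) ^ (1-α) ≤ M := le_max_right _ _
  have hM0 : (0:ℝ) < M := lt_of_lt_of_le one_pos hM1
  set γ : ℝ := max (1 - α) (((n:ℝ) - 2) / (2 * n)) with hγdef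
  have hq0 : 0 < ((n:ℝ)-2)/(2*n) := by apply div_pos <;> linarith
  have hγ0 : 0 < γ := lt_of_lt_of_le hq0 (le_max_right _ _)
  have hne : ((n:ℝ)-2)/n = 1 - 2/n := by field_simp
  have hγlt : γ < ((n:ℝ)-2)/n := by
    apply max_lt
    · rw [hne]; linarith
    · exact div_lt_div_of_pos_left (by linarith) (by linarith) (by linarith)
  -- rewrite H
  have hHs : ∀ s : ℝ, 0 < s → H s = ∫ σ in (0:ℝ)..s, (σ+1) ^ (1-α) := by
    intro s hs
    rw [hH]
    apply intervalIntegral.integral_congr_ae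
    have h0 : ∀ᵐ x : ℝ ∂volume, x ≠ 0 := by
      rw [ae_iff]
      simpa using measure_singleton (0:ℝ)
    filter_upwards [h0] with x hx hmem
    rw [Set.uIoc_of_le hs.le] at hmem
    have hx0 : 0 < x := hmem.1
    have hx1 : (0:ℝ) < x + 1 := by linarith
    rw [hφ, hψ, mul_div_mul_left _ _ (ne_of_gt hx0),
      (Real.rpow_sub hx1 (-p) (q-1)).symm]
    congr 1
    rw [hαdef]; ring
  -- nonnegativity of integrand
  have hφψ : ∀ τ : ℝ, 0 < τ → 0 ≤ φ τ / ψ τ := by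
    intro τ hτ
    rw [hφ, hψ]
    have h1 : (0:ℝ) ≤ τ + 1 := by linarith
    exact div_nonneg (Real.rpow_nonneg h1 _)
      (mul_nonneg hτ.le (Real.rpow_nonneg h1 _))
  -- G is nonnegative
  have hGnonneg : ∀ s : ℝ, 0 < s → 0 ≤ G s := by
    intro s hs
    rw [hG]
    rcases le_or_gt 1 s with h1 | h1
    · apply intervalIntegral.integral_nonneg h1
      intro σ hσ
      apply intervalIntegral.integral_nonneg hσ.1
      intro τ hτ
      exact hφψ τ (by linarith [hτ.1])
    · rw [intervalIntegral.integral_symm s 1, neg_nonneg]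
      have : ∀ σ ∈ Set.Icc s 1, (∫ τ in (1:ℝ)..σ, φ τ / ψ τ) ≤ 0 := by
        intro σ hσ
        rw [intervalIntegral.integral_symm σ 1, neg_nonpos]
        apply intervalIntegral.integral_nonneg hσ.2
        intro τ hτ
        exact hφψ τ (by have := hτ.1; have := hσ.1; linarith)
      have h2 : 0 ≤ ∫ σ in s..(1:ℝ), -(∫ τ in (1:ℝ)..σ, φ τ / ψ τ) :=
        intervalIntegral.integral_nonneg h1.le
          (fun σ hσ => neg_nonneg.2 (this σ hσ))
      rw [intervalIntegral.integral_neg] at h2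
      linarith
  -- integrand bound for small s or α ≥ 1
  have hcontOn : ∀ (r a b : ℝ), (0:ℝ) ≤ a →
      ContinuousOn (fun σ : ℝ => (σ+1) ^ r) (Set.Icc a b) := by
    intro r a b ha
    apply ContinuousOn.rpow_const (by fun_prop)
    intro x hx
    left
    have := hx.1
    intro hcon; linarith [hcon]
  have hInt : ∀ (r a b : ℝ), (0:ℝ) ≤ a → a ≤ b →
      IntervalIntegrable (fun σ : ℝ => (σ+1) ^ r) volume a b := by
    intro r a b ha hab
    exact ((hcontOn r a b ha).mono (by rw [Set.uIcc_of_le hab])).intervalIntegrable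
  have hbound : ∀ s : ℝ, 0 < s → (1 - α ≤ 0 ∨ s ≤ 1) →
      (∫ σ in (0:ℝ)..s, (σ+1) ^ (1-α)) ≤ M * s := by
    intro s hs hcase
    have h1 : (∫ σ in (0:ℝ)..s, (σ+1) ^ (1-α)) ≤ ∫ _σ in (0:ℝ)..s, M := by
      apply intervalIntegral.integral_mono_on hs.le (hInt (1-α) 0 s le_rfl hs.le)
        intervalIntegrable_const
      intro x hx
      rcases le_or_gt (1-α) 0 with hA | hA
      · exact le_trans
          (Real.rpow_le_one_of_one_le_of_nonpos (by linarith [hx.1]) hA) hM1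
      · rcases hcase with hc | hc
        · linarith
        · refine le_trans ?_ hM2
          apply Real.rpow_le_rpow (by linarith [hx.1]) ?_ hA.le
          have := hx.2; linarith
    rw [intervalIntegral.integral_const, smul_eq_mul, sub_zero, mul_comm] at h1
    exact h1
  refine ⟨γ, ⟨hγ0, hγlt⟩, M, hM0, ?_⟩
  intro s hs
  have hGn := hGnonneg s hs
  by_cases hc : 1 - α ≤ 0 ∨ s ≤ 1
  · have := hbound s hs hc
    rw [hHs s hs]
    nlinarith [mul_nonneg hγ0.le hGn]
  · push_neg at hc
    obtain ⟨hA, hs1⟩ := hc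
    set h : ℝ → ℝ := fun τ => (τ+1)^(1-α)/τ with hhdef
    have hGs : G s = ∫ σ in (1:ℝ)..s, ∫ τ in (1:ℝ)..σ, h τ := by
      rw [hG]
      apply intervalIntegral.integral_congr
      intro σ hσ
      rw [Set.uIcc_of_le hs1.le] at hσ
      apply intervalIntegral.integral_congr
      intro τ hτ
      rw [Set.uIcc_of_le hσ.1] at hτ
      have hτ1 : (1:ℝ) ≤ τ := hτ.1
      have hτp : (0:ℝ) < τ + 1 := by linarith
      have e1 : ((τ:ℝ)+1)^(1-α) = (τ+1)^(-p)/(τ+1)^(q-1) := by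
        rw [← Real.rpow_sub hτp]
        congr 1
        rw [hαdef]; ring
      show φ τ / ψ τ = h τ
      rw [hφ, hψ, hhdef]
      simp only
      rw [e1, div_div, mul_comm]
    have hcont_h : ∀ b : ℝ, ContinuousOn h (Set.Icc 1 b) := by
      intro b
      apply ContinuousOn.div (hcontOn (1-α) 1 b zero_le_one) continuousOn_id
      intro x hx
      have h1 := hx.1
      intro hcon
      simp only [id_eq] at hcon
      linarith
    have hInt_h : ∀ σ : ℝ, 1 ≤ σ → IntervalIntegrable h volume 1 σ := by
      intro σ hσ
      exact ((hcont_h σ).mono (by rw [Set.uIcc_of_le hσ])).intervalIntegrable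
    have hJle : ∀ σ : ℝ, 1 ≤ σ →
        ((σ+1)^(1-α) - 2^(1-α))/(1-α) ≤ ∫ τ in (1:ℝ)..σ, h τ := by
      intro σ hσ
      have e2 : (∫ τ in (1:ℝ)..σ, (τ+1)^(-α)) = ((σ+1)^(1-α) - 2^(1-α))/(1-α) := by
        have e2a := intervalIntegral.integral_comp_add_right
          (a := (1:ℝ)) (b := σ) (fun x : ℝ => x^(-α)) 1
        rw [e2a, integral_rpow (Or.inl (by linarith : (-1:ℝ) < -α))]
        norm_num
        rw [show -α + 1 = 1 - α by ring]
      rw [← e2]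
      apply intervalIntegral.integral_mono_on hσ
        (hInt (-α) 1 σ zero_le_one hσ) (hInt_h σ hσ)
      intro τ hτ
      have hτ0 : (0:ℝ) < τ := by linarith [hτ.1]
      have hτp : (0:ℝ) < τ + 1 := by linarith
      rw [hhdef]
      simp only
      rw [le_div_iff₀ hτ0]
      calc (τ+1)^(-α) * τ ≤ (τ+1)^(-α) * (τ+1) :=
            mul_le_mul_of_nonneg_left (by linarith) (Real.rpow_nonneg hτp.le _)
        _ = (τ+1)^(1-α) := by
            rw [show (1:ℝ)-α = -α+1 by ring, Real.rpow_add_one hτp.ne']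
    have hprim : ContinuousOn (fun σ : ℝ => ∫ τ in (1:ℝ)..σ, h τ) (Set.uIcc 1 s) :=
      intervalIntegral.continuousOn_primitive_interval' (hInt_h s hs1.le)
        Set.left_mem_uIcc
    have hIntInner : IntervalIntegrable (fun σ : ℝ => ∫ τ in (1:ℝ)..σ, h τ)
        volume 1 s := hprim.intervalIntegrable
    have hJcont : ContinuousOn (fun σ : ℝ => ((σ+1)^(1-α) - 2^(1-α))/(1-α))
        (Set.Icc 1 s) :=
      ((hcontOn (1-α) 1 s zero_le_one).sub continuousOn_const).div_const _
    have hJint : IntervalIntegrable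
        (fun σ : ℝ => ((σ+1)^(1-α) - 2^(1-α))/(1-α)) volume 1 s :=
      (hJcont.mono (by rw [Set.uIcc_of_le hs1.le])).intervalIntegrable
    have step3 : (∫ σ in (1:ℝ)..s, ((σ+1)^(1-α) - 2^(1-α))/(1-α)) ≤ G s := by
      rw [hGs]
      exact intervalIntegral.integral_mono_on hs1.le hJint hIntInner
        (fun σ hσ => hJle σ hσ.1)
    have e3 : (∫ σ in (1:ℝ)..s, ((σ+1)^(1-α) - 2^(1-α))/(1-α))
        = ((∫ σ in (1:ℝ)..s, (σ+1)^(1-α)) - (s-1) * 2^(1-α)) / (1-α) := by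
      rw [intervalIntegral.integral_div]
      congr 1
      rw [intervalIntegral.integral_sub (hInt (1-α) 1 s zero_le_one hs1.le)
        intervalIntegrable_const, intervalIntegral.integral_const, smul_eq_mul]
    have e4 : (∫ σ in (0:ℝ)..1, (σ+1)^(1-α)) + (∫ σ in (1:ℝ)..s, (σ+1)^(1-α))
        = ∫ σ in (0:ℝ)..s, (σ+1)^(1-α) :=
      intervalIntegral.integral_add_adjacent_intervals
        (hInt (1-α) 0 1 le_rfl zero_le_one) (hInt (1-α) 1 s zero_le_one hs1.le)
    have e5 : (∫ σ in (0:ℝ)..1, (σ+1)^(1-α)) ≤ M := by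
      have := hbound 1 one_pos (Or.inr le_rfl)
      simpa using this
    rw [e3] at step3
    rw [div_le_iff₀ hA] at step3
    have hγG : (1-α) * G s ≤ γ * G s :=
      mul_le_mul_of_nonneg_right (le_max_left _ _) hGn
    have h2M : (s-1) * 2^(1-α) ≤ (s-1) * M :=
      mul_le_mul_of_nonneg_left hM2 (by linarith)
    rw [hHs s hs, ← e4]
    nlinarith [step3]
end

section
/- Let p ≤ 0 and q > 2/n for some integer n ≥ 3, and define ψ(s) = s(s+1)^{q-1} and G(s) = ∫_{1}^{s} ∫_{1}^{σ} (τ+1)^{-p}/ψ(τ) dτ dσ. Then there exists L > 0 such that s²/ψ(s) ≤ L(G(s) + s + 1) for all s > 0. -/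
open MeasureTheory intervalIntegral

theorem stmt2 (n : ℕ) (hn : 3 ≤ n) (p q : ℝ) (hp : p ≤ 0)
    (hq : 2 / (n : ℝ) < q)
    (ψ G : ℝ → ℝ)
    (hψ : ∀ s, ψ s = s * (s + 1) ^ (q - 1))
    (hG : ∀ s, G s = ∫ σ in (1:ℝ)..s, ∫ τ in (1:ℝ)..σ, (τ + 1) ^ (-p) / ψ τ) :
    ∃ L > (0:ℝ), ∀ s > (0:ℝ), s ^ 2 / ψ s ≤ L * (G s + s + 1) := by
  have hn0 : (0:ℝ) < n := by positivity
  have hq0 : 0 < q := lt_trans (by positivity) hq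
  set f : ℝ → ℝ := fun τ => (τ + 1) ^ (-p) / ψ τ with hfdef
  -- continuity of f on (0, ∞)
  have hfc : ContinuousOn f (Set.Ioi (0:ℝ)) := by
    have hb : ContinuousOn (fun τ : ℝ => τ + 1) (Set.Ioi (0:ℝ)) :=
      (continuous_id.add continuous_const).continuousOn
    have h1 : ContinuousOn (fun τ : ℝ => (τ + 1) ^ (-p)) (Set.Ioi (0:ℝ)) :=
      hb.rpow_const (fun x hx => Or.inl (by simp only [Set.mem_Ioi] at hx; positivity))
    have h2 : ContinuousOn ψ (Set.Ioi (0:ℝ)) := by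
      have : ContinuousOn (fun τ : ℝ => τ * (τ + 1) ^ (q - 1)) (Set.Ioi (0:ℝ)) :=
        continuousOn_id.mul
          (hb.rpow_const (fun x hx => Or.inl (by simp only [Set.mem_Ioi] at hx; positivity)))
      exact this.congr (fun x _ => hψ x)
    exact h1.div h2 (fun x hx => by simp only [Set.mem_Ioi] at hx; rw [hψ]; positivity)
  have hfnn : ∀ τ : ℝ, 0 < τ → 0 ≤ f τ := by
    intro τ hτ
    simp only [hfdef, hψ]
    positivity
  have hint : ∀ a b : ℝ, 0 < a → 0 < b → IntervalIntegrable f volume a b := by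
    intro a b ha hb
    refine (hfc.mono ?_).intervalIntegrable
    intro x hx
    exact lt_of_lt_of_le (lt_inf_iff.mpr ⟨ha, hb⟩) hx.1
  set g : ℝ → ℝ := fun σ => ∫ τ in (1:ℝ)..σ, f τ with hgdef
  have hgnn : ∀ σ : ℝ, 1 ≤ σ → 0 ≤ g σ := by
    intro σ hσ
    apply intervalIntegral.integral_nonneg hσ
    intro τ hτ
    exact hfnn τ (by linarith [hτ.1])
  -- G is nonnegative for s > 0
  have hGnn : ∀ s : ℝ, 0 < s → 0 ≤ G s := by
    intro s hs
    rw [hG]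
    rcases le_or_gt 1 s with h1 | h1
    · exact intervalIntegral.integral_nonneg h1 (fun σ hσ => hgnn σ hσ.1)
    · rw [intervalIntegral.integral_symm, neg_nonneg]
      have hneg : 0 ≤ ∫ σ in s..(1:ℝ), -(∫ τ in (1:ℝ)..σ, f τ) := by
        apply intervalIntegral.integral_nonneg h1.le
        intro σ hσ
        show 0 ≤ -(∫ τ in (1:ℝ)..σ, f τ)
        rw [← intervalIntegral.integral_symm]
        exact intervalIntegral.integral_nonneg hσ.2
          (fun τ hτ => hfnn τ (by linarith [hτ.1, hσ.1]))
      rw [intervalIntegral.integral_neg] at hneg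
      linarith
  refine ⟨20, by norm_num, ?_⟩
  intro s hs
  have hψs : ψ s = s * (s + 1) ^ (q - 1) := hψ s
  have hden : 0 < s * (s + 1) ^ (q - 1) := by positivity
  rcases le_or_gt s 4 with h4 | h4
  · -- small s: s^2/ψ s ≤ s(s+1) ≤ 20
    have key : s ^ 2 / ψ s ≤ 20 := by
      rw [hψs, div_le_iff₀ hden]
      have hexp : (s + 1) ^ (-(1:ℝ)) ≤ (s + 1) ^ (q - 1) :=
        Real.rpow_le_rpow_of_exponent_le (by linarith) (by linarith)
      have hsmall : s ^ 2 ≤ 20 * (s * (s + 1) ^ (-(1:ℝ))) := by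
        rw [Real.rpow_neg_one, ← div_eq_mul_inv, ← mul_div_assoc, le_div_iff₀ (by linarith)]
        nlinarith [mul_nonneg hs.le (by linarith : (0:ℝ) ≤ 4 - s),
          mul_nonneg (mul_nonneg hs.le hs.le) (by linarith : (0:ℝ) ≤ 4 - s)]
      calc s ^ 2 ≤ 20 * (s * (s + 1) ^ (-(1:ℝ))) := hsmall
        _ ≤ 20 * (s * (s + 1) ^ (q - 1)) := by
            have := mul_le_mul_of_nonneg_left hexp hs.le
            linarith
    have h1 : (1:ℝ) ≤ G s + s + 1 := by have := hGnn s hs; linarith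
    calc s ^ 2 / ψ s ≤ 20 := key
      _ ≤ 20 * (G s + s + 1) := by linarith
  · -- large s
    have hs1 : (1:ℝ) ≤ s := by linarith
    set c : ℝ := (s + 1) ^ (-q) with hcdef
    have hcpos : 0 < c := by rw [hcdef]; positivity
    -- pointwise lower bound
    have hfl : ∀ τ : ℝ, 1 ≤ τ → τ ≤ s → c ≤ f τ := by
      intro τ h1 h2
      have hτ1 : (0:ℝ) < τ + 1 := by linarith
      have e1 : c ≤ (τ + 1) ^ (-q) :=
        Real.rpow_le_rpow_of_nonpos hτ1 (by linarith) (by linarith)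
      have e2 : (τ + 1) ^ (-q) = 1 / (τ + 1) ^ q := by
        rw [Real.rpow_neg (by linarith), one_div]
      have hsplit : (τ + 1) ^ q = (τ + 1) * (τ + 1) ^ (q - 1) := by
        have h := Real.rpow_add hτ1 1 (q - 1)
        rw [show (1:ℝ) + (q - 1) = q by ring] at h
        rw [h, Real.rpow_one]
      have e3 : τ * (τ + 1) ^ (q - 1) ≤ (τ + 1) ^ q := by
        rw [hsplit]
        exact mul_le_mul_of_nonneg_right (by linarith) (by positivity)
      have e4 : (1:ℝ) ≤ (τ + 1) ^ (-p) := by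
        have h := Real.rpow_le_rpow_of_exponent_le (by linarith : (1:ℝ) ≤ τ + 1)
          (by linarith : (0:ℝ) ≤ -p)
        rwa [Real.rpow_zero] at h
      calc c ≤ (τ + 1) ^ (-q) := e1
        _ = 1 / (τ + 1) ^ q := e2
        _ ≤ (τ + 1) ^ (-p) / (τ * (τ + 1) ^ (q - 1)) :=
            div_le_div₀ (by positivity) e4 (by positivity) e3
        _ = f τ := by rw [hfdef]; simp only; rw [hψ]
    -- lower bound for g on [s/2, s]
    have hglow : ∀ σ : ℝ, s / 2 ≤ σ → σ ≤ s → s / 4 * c ≤ g σ := by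
      intro σ hσ1 hσ2
      have hσ2' : (2:ℝ) ≤ σ := by linarith
      have i1 : IntervalIntegrable f volume 1 (σ / 2) := hint _ _ one_pos (by linarith)
      have i2 : IntervalIntegrable f volume (σ / 2) σ := hint _ _ (by linarith) (by linarith)
      have hsplit : g σ = (∫ τ in (1:ℝ)..(σ / 2), f τ) + ∫ τ in (σ / 2)..σ, f τ :=
        (intervalIntegral.integral_add_adjacent_intervals i1 i2).symm
      have h1 : 0 ≤ ∫ τ in (1:ℝ)..(σ / 2), f τ :=
        intervalIntegral.integral_nonneg (by linarith)
          (fun τ hτ => hfnn τ (by linarith [hτ.1]))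
      have h2 : (σ - σ / 2) * c ≤ ∫ τ in (σ / 2)..σ, f τ := by
        have h := intervalIntegral.integral_mono_on (by linarith : σ / 2 ≤ σ)
          intervalIntegrable_const i2
          (fun τ hτ => hfl τ (by linarith [hτ.1]) (by linarith [hτ.2]))
        rwa [intervalIntegral.integral_const, smul_eq_mul] at h
      have h3 : s / 4 * c ≤ (σ - σ / 2) * c :=
        mul_le_mul_of_nonneg_right (by linarith) hcpos.le
      rw [hsplit]; linarith
    -- integrability of g
    have hGc : ContinuousOn g (Set.uIcc 1 s) :=
      intervalIntegral.continuousOn_primitive_interval'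
        (hint 1 s one_pos (by linarith)) Set.left_mem_uIcc
    have hmem_half : s / 2 ∈ Set.uIcc (1:ℝ) s := by
      rw [Set.uIcc_of_le (by linarith : (1:ℝ) ≤ s)]
      exact Set.mem_Icc.mpr ⟨by linarith, by linarith⟩
    have hsub1 : Set.uIcc (1:ℝ) (s / 2) ⊆ Set.uIcc 1 s :=
      Set.uIcc_subset_uIcc Set.left_mem_uIcc hmem_half
    have hsub2 : Set.uIcc (s / 2) s ⊆ Set.uIcc 1 s :=
      Set.uIcc_subset_uIcc hmem_half Set.right_mem_uIcc
    have hgi1 : IntervalIntegrable g volume 1 (s / 2) :=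
      (hGc.mono hsub1).intervalIntegrable
    have hgi2 : IntervalIntegrable g volume (s / 2) s :=
      (hGc.mono hsub2).intervalIntegrable
    have hGsplit : G s = (∫ σ in (1:ℝ)..(s / 2), g σ) + ∫ σ in (s / 2)..s, g σ := by
      rw [hG]
      exact (intervalIntegral.integral_add_adjacent_intervals hgi1 hgi2).symm
    have a1 : 0 ≤ ∫ σ in (1:ℝ)..(s / 2), g σ :=
      intervalIntegral.integral_nonneg (by linarith) (fun σ hσ => hgnn σ hσ.1)
    have a2 : (s - s / 2) * (s / 4 * c) ≤ ∫ σ in (s / 2)..s, g σ := by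
      have h := intervalIntegral.integral_mono_on (by linarith : s / 2 ≤ s)
        intervalIntegrable_const hgi2 (fun σ hσ => hglow σ hσ.1 hσ.2)
      rwa [intervalIntegral.integral_const, smul_eq_mul] at h
    have hGlow : s ^ 2 / 8 * c ≤ G s := by
      have heq : (s - s / 2) * (s / 4 * c) = s ^ 2 / 8 * c := by ring
      rw [hGsplit]; linarith [heq ▸ a2]
    have key : s ^ 2 / ψ s ≤ 2 * (s ^ 2 * c) := by
      rw [hψs, div_le_iff₀ hden]
      have hcomb : c * (s + 1) ^ (q - 1) = (s + 1) ^ (-(1:ℝ)) := by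
        rw [hcdef, ← Real.rpow_add (by linarith)]
        congr 1
        ring
      have hre : 2 * (s ^ 2 * c) * (s * (s + 1) ^ (q - 1))
          = 2 * s ^ 3 * (c * (s + 1) ^ (q - 1)) := by ring
      rw [hre, hcomb, Real.rpow_neg_one, ← div_eq_mul_inv, le_div_iff₀ (by linarith)]
      nlinarith [mul_nonneg (mul_nonneg hs.le hs.le) (by linarith : (0:ℝ) ≤ s - 1)]
    have hGnns := hGnn s hs
    calc s ^ 2 / ψ s ≤ 2 * (s ^ 2 * c) := key
      _ = 16 * (s ^ 2 / 8 * c) := by ring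
      _ ≤ 16 * G s := by linarith
      _ ≤ 20 * (G s + s + 1) := by linarith
end

section
/- Let γ > 0 and for k ∈ ℕ, k ≥ 1, define on the disc Ω = B(0,R) ⊂ ℝ² the functions w_k(x) := ln((1/k)²/((1/k)² + π|x|²)²). Then ∫_Ω |∇w_k|² dx = 32π·ln k + O(1) as k → ∞, i.e. there is C > 0 with |∫_Ω |∇w_k|² dx − 32π·ln k| ≤ C for all k. -/
open MeasureTheory Real Set

local notation "EE" => EuclideanSpace ℝ (Fin 2)

private lemma stmt13_grad_sq : ∀ x : EE, HasGradientAt (fun y : EE => ‖y‖^2) ((2:ℝ) • x) x := by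
  intro x
  rw [hasGradientAt_iff_hasFDerivAt]
  have h := (hasFDerivAt_id x).inner ℝ (hasFDerivAt_id x)
  simp only [real_inner_self_eq_norm_sq] at h
  refine h.congr_fderiv ?_
  ext y
  simp [fderivInnerCLM, real_inner_smul_left, real_inner_comm x y]
  ring

private lemma stmt13_grad_w (ε2 : ℝ) (hε : 0 < ε2) (x : EE) :
    HasGradientAt (fun y : EE => Real.log ε2 - 2 * Real.log (ε2 + π * ‖y‖^2))
      ((-4 * π / (ε2 + π * ‖x‖^2)) • x) x := by
  have hd : 0 < ε2 + π * ‖x‖^2 := by positivity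
  have hφ : HasDerivAt (fun t : ℝ => Real.log ε2 - 2 * Real.log (ε2 + π * t))
      (-(2 * (π / (ε2 + π * ‖x‖^2)))) (‖x‖^2) := by
    have h1 : HasDerivAt (fun t : ℝ => ε2 + π * t) π (‖x‖^2) := by
      simpa using ((hasDerivAt_id (‖x‖^2)).const_mul π).const_add ε2
    have h2 := (h1.log hd.ne')
    simpa using ((h2.const_mul 2).const_sub (Real.log ε2))
  have hN := stmt13_grad_sq x
  rw [hasGradientAt_iff_hasFDerivAt] at hN ⊢
  have hcomp := (hφ.hasFDerivAt.comp x hN)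
  refine hcomp.congr_fderiv ?_
  ext y
  simp [real_inner_smul_left]
  ring

private lemma stmt13_ftc (ε2 R : ℝ) (hε : 0 < ε2) :
    ∫ y in (0:ℝ)..R, y * (16 * π^2 * y^2 / (ε2 + π * y^2)^2)
      = 8 * (Real.log (ε2 + π * R^2) + ε2 / (ε2 + π * R^2)) - 8 * (Real.log ε2 + 1) := by
  have hderiv : ∀ r ∈ Set.uIcc (0:ℝ) R,
      HasDerivAt (fun r : ℝ => 8 * (Real.log (ε2 + π * r^2) + ε2 / (ε2 + π * r^2)))
        (r * (16 * π^2 * r^2 / (ε2 + π * r^2)^2)) r := by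
    intro r _
    have hd : 0 < ε2 + π * r^2 := by positivity
    have h1 : HasDerivAt (fun r : ℝ => ε2 + π * r^2) (2 * π * r) r := by
      simpa [mul_comm, mul_assoc, mul_left_comm] using
        (((hasDerivAt_pow 2 r)).const_mul π).const_add ε2
    have h2 := h1.log hd.ne'
    have h3 : HasDerivAt (fun r : ℝ => ε2 / (ε2 + π * r^2))
        (-(ε2 * (2 * π * r)) / (ε2 + π * r^2)^2) r := by
      exact ((hasDerivAt_const r ε2).div h1 hd.ne').congr_deriv (by ring)
    have h4 := (h2.add h3).const_mul 8
    refine h4.congr_deriv ?_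
    field_simp
    ring
  have hcont : IntervalIntegrable (fun y : ℝ => y * (16 * π^2 * y^2 / (ε2 + π * y^2)^2))
      volume 0 R := by
    apply Continuous.intervalIntegrable
    exact continuous_id.mul (((continuous_const.mul (continuous_pow 2)).div
      ((continuous_const.add (continuous_const.mul (continuous_pow 2))).pow 2)
      (fun y => by positivity)))
  rw [intervalIntegral.integral_eq_sub_of_hasDerivAt hderiv hcont]
  norm_num
  exact hε.ne'

private lemma stmt13_vol_unit_ball : (volume (Metric.ball (0:EE) 1)).toReal = π := by
  rw [EuclideanSpace.volume_ball]
  have : ((2:ℝ)/2 + 1) = 2 := by norm_num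
  simp [Fintype.card_fin, this, Real.Gamma_two, Real.sq_sqrt Real.pi_nonneg]
  norm_num [ENNReal.toReal_ofReal Real.pi_nonneg]

private lemma stmt13_polar (F : ℝ → ℝ) (R : ℝ) (hR : 0 < R) :
    ∫ x in Metric.ball (0:EE) R, F ‖x‖
      = 2 * π * ∫ y in (0:ℝ)..R, y * F y := by
  have h1 : ∫ x in Metric.ball (0:EE) R, F ‖x‖ = ∫ x : EE, (Iio R).indicator F ‖x‖ := by
    rw [← integral_indicator measurableSet_ball]
    congr 1
    funext x
    by_cases h : ‖x‖ < R <;>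
      simp [Set.indicator, h, Metric.mem_ball, dist_zero_right]
  rw [h1, integral_fun_norm_addHaar (volume : Measure EE) ((Iio R).indicator F)]
  have hdim : Module.finrank ℝ EE = 2 := by simp [finrank_euclideanSpace]
  rw [hdim, measureReal_def, stmt13_vol_unit_ball]
  have h2 : (fun y : ℝ => y ^ (2-1) • (Iio R).indicator F y)
      = (Iio R).indicator (fun y => y * F y) := by
    funext y
    by_cases h : y < R <;> simp [Set.indicator, h]
  rw [h2, setIntegral_indicator measurableSet_Iio]
  have h3 : Ioi (0:ℝ) ∩ Iio R = Ioo 0 R := by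
    ext y; simp [mem_Ioo, and_comm]
  rw [h3, intervalIntegral.integral_of_le hR.le, integral_Ioc_eq_integral_Ioo]
  rw [nsmul_eq_mul, smul_eq_mul]
  push_cast
  ring

theorem stmt13 (γ R : ℝ) (hγ : 0 < γ) (hR : 0 < R)
    (w : ℕ → EuclideanSpace ℝ (Fin 2) → ℝ)
    (hw : ∀ k : ℕ, ∀ x, w k x =
      Real.log ((1 / (k : ℝ)) ^ 2 / ((1 / (k : ℝ)) ^ 2 + π * ‖x‖ ^ 2) ^ 2)) :
    ∃ C > (0:ℝ), ∀ k : ℕ, 1 ≤ k →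
      |(∫ x in Metric.ball (0 : EuclideanSpace ℝ (Fin 2)) R, ‖gradient (w k) x‖ ^ 2)
        - 32 * π * Real.log k| ≤ C := by
  set M : ℝ := |Real.log (π * R^2)| + Real.log (1 + π * R^2) with hM
  have hM0 : 0 ≤ M := by
    have : (0:ℝ) ≤ Real.log (1 + π * R^2) := Real.log_nonneg (by nlinarith [Real.pi_pos])
    have := abs_nonneg (Real.log (π * R^2))
    linarith
  refine ⟨16 * π * (M + 1) + 1, by nlinarith [Real.pi_pos], ?_⟩
  intro k hk
  have hk1 : (1:ℝ) ≤ (k:ℝ) := by exact_mod_cast hk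
  have hk0 : (0:ℝ) < (k:ℝ) := by linarith
  set ε2 : ℝ := (1 / (k:ℝ))^2 with hε2
  have hε : 0 < ε2 := by positivity
  have hε1 : ε2 ≤ 1 := by
    rw [hε2]
    rw [div_pow, one_pow]
    exact div_le_one_of_le₀ (by nlinarith) (by positivity)
  -- rewrite w k
  have hwk : w k = fun x : EE => Real.log ε2 - 2 * Real.log (ε2 + π * ‖x‖^2) := by
    funext x
    have hd : 0 < ε2 + π * ‖x‖^2 := by positivity
    rw [hw k x, ← hε2, Real.log_div hε.ne' (pow_ne_zero 2 hd.ne')]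
    simp only [Real.log_pow]
    push_cast
    ring
  -- gradient norm squared pointwise
  have hgrad : ∀ x : EE, ‖gradient (w k) x‖^2
      = 16 * π^2 * ‖x‖^2 / (ε2 + π * ‖x‖^2)^2 := by
    intro x
    have hd : 0 < ε2 + π * ‖x‖^2 := by positivity
    have h := (stmt13_grad_w ε2 hε x).gradient
    rw [hwk, h, norm_smul, Real.norm_eq_abs, mul_pow, sq_abs, div_pow]
    rw [neg_mul, neg_pow, Even.neg_one_pow (by norm_num)]
    ring
  simp only [hgrad]
  have hp := stmt13_polar (fun r => 16 * π^2 * r^2 / (ε2 + π * r^2)^2) R hR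
  rw [hp, stmt13_ftc ε2 R hε]
  -- log ε2 = -2 log k
  have hlogε : Real.log ε2 = -(2 * Real.log k) := by
    rw [hε2, Real.log_pow, one_div, Real.log_inv]
    push_cast
    ring
  rw [hlogε]
  set A : ℝ := Real.log (ε2 + π * R^2) with hA
  set B : ℝ := ε2 / (ε2 + π * R^2) with hB
  have hd : 0 < ε2 + π * R^2 := by positivity
  have key : 2 * π * (8 * (A + B) - 8 * (-(2 * Real.log k) + 1)) - 32 * π * Real.log k
      = 16 * π * (A + (B - 1)) := by ring
  rw [key]
  have hAbound : |A| ≤ M := by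
    have hup : A ≤ Real.log (1 + π * R^2) :=
      Real.log_le_log hd (by linarith)
    have hlo : Real.log (π * R^2) ≤ A :=
      Real.log_le_log (by positivity) (by linarith)
    rw [abs_le]
    constructor
    · calc -M ≤ -|Real.log (π * R^2)| := by
            have : (0:ℝ) ≤ Real.log (1 + π * R^2) := Real.log_nonneg (by nlinarith [Real.pi_pos])
            rw [hM]; linarith
        _ ≤ Real.log (π * R^2) := neg_abs_le _
        _ ≤ A := hlo
    · calc A ≤ Real.log (1 + π * R^2) := hup
        _ ≤ M := by rw [hM]; have := abs_nonneg (Real.log (π * R^2)); linarith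
  have hBbound : |B - 1| ≤ 1 := by
    have hB0 : 0 ≤ B := by positivity
    have hB1 : B ≤ 1 := div_le_one_of_le₀ (by nlinarith [Real.pi_pos, sq_nonneg R]) hd.le
    rw [abs_le]; constructor <;> linarith
  calc |16 * π * (A + (B - 1))| = 16 * π * |A + (B - 1)| := by
        rw [abs_mul, abs_of_nonneg (by positivity : (0:ℝ) ≤ 16 * π)]
    _ ≤ 16 * π * (|A| + |B - 1|) := by
        have := abs_add_le A (B - 1)
        nlinarith [Real.pi_pos]
    _ ≤ 16 * π * (M + 1) := by nlinarith [Real.pi_pos]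
    _ ≤ 16 * π * (M + 1) + 1 := by linarith
end
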